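/- arXiv:1001.5307 — 2 statements merged into one kernel-verified Lean document; each statement's English description precedes it below -/
import Mathlib

section
/- Let k ≥ 2 and n ≥ 1, let ω = e^(2πi/k), and let W_k be the k×k unitary matrix with entries (W_k)_{j,x} = ω^(xj)/√k. Then for every t ∈ {0,...,k-1}, applying W_k^⊗n to the state (1/√k) Σ_{x=0}^{k-1} ω^(tx) |x⟩^⊗n yields (1/√(k^(n-1))) Σ_{y ∈ {0,...,k-1}^n : t + Σ_j y_j ≡ 0 (mod k)} |y⟩. -/
open Complex

/-- Applying `W_k^⊗n` (with `(W_k)_{j,x} = ω^(xj)/√k`, `ω = e^(2πi/k)`) to the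
state `(1/√k) Σ_{x=0}^{k-1} ω^(tx) |x⟩^⊗n` yields
`(1/√(k^(n-1))) Σ_{y : t + Σ_j y_j ≡ 0 (mod k)} |y⟩`. -/
theorem stmt_6 (k n : ℕ) (hk : 2 ≤ k) (hn : 1 ≤ n) (t : ℕ) (ht : t < k)
    (ω : ℂ) (hω : ω = Complex.exp (2 * Real.pi * Complex.I / k))
    (W : Matrix (Fin k) (Fin k) ℂ)
    (hW : ∀ j x, W j x = ω ^ ((x : ℕ) * (j : ℕ)) / Real.sqrt k)
    (ψ : (Fin n → Fin k) → ℂ)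
    (hψ : ∀ z, ψ z = (1 / Real.sqrt k : ℂ) *
        ∑ x : Fin k, if z = Function.const (Fin n) x then ω ^ (t * (x : ℕ)) else 0) :
    (fun y : Fin n → Fin k => ∑ z : Fin n → Fin k, (∏ j, W (y j) (z j)) * ψ z)
      = fun y : Fin n → Fin k =>
          if k ∣ (t + ∑ j, (y j : ℕ)) then (1 / Real.sqrt (k ^ (n - 1)) : ℂ) else 0 := by
  have hk0 : k ≠ 0 := by omega
  have hprim : IsPrimitiveRoot ω k := hω ▸ Complex.isPrimitiveRoot_exp k hk0
  have hgeom : ∀ m : ℕ, (∑ x : Fin k, ω ^ ((x : ℕ) * m)) = if k ∣ m then (k : ℂ) else 0 := by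
    intro m
    have h1 : ∀ x : Fin k, ω ^ ((x : ℕ) * m) = (ω ^ m) ^ (x : ℕ) := by
      intro x; rw [← pow_mul, mul_comm]
    simp only [h1]
    rw [Fin.sum_univ_eq_sum_range (fun i => (ω ^ m) ^ i) k]
    by_cases h : k ∣ m
    · have : ω ^ m = 1 := (hprim.pow_eq_one_iff_dvd m).mpr h
      simp [this, h]
    · have hne : ω ^ m ≠ 1 := fun hh => h ((hprim.pow_eq_one_iff_dvd m).mp hh)
      rw [geom_sum_eq hne]
      have hk1 : (ω ^ m) ^ k = 1 := by
        rw [← pow_mul, mul_comm, pow_mul, hprim.pow_eq_one, one_pow]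
      simp [hk1, h]
  have hs0 : (0 : ℝ) < Real.sqrt k := Real.sqrt_pos.mpr (by positivity)
  have hsne : ((Real.sqrt k : ℝ) : ℂ) ≠ 0 := Complex.ofReal_ne_zero.mpr (ne_of_gt hs0)
  have hs2 : ((Real.sqrt k : ℝ) : ℂ) ^ 2 = (k : ℂ) := by
    rw [← Complex.ofReal_pow, Real.sq_sqrt (by positivity)]
    norm_cast
  funext y
  set s : ℂ := ((Real.sqrt k : ℝ) : ℂ) with hs
  have step1 : (∑ z : Fin n → Fin k, (∏ j, W (y j) (z j)) * ψ z)
      = ∑ x : Fin k, ∑ z : Fin n → Fin k,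
          if z = Function.const (Fin n) x then
            (∏ j, W (y j) (z j)) * ((1 / s) * ω ^ (t * (x : ℕ))) else 0 := by
    rw [Finset.sum_comm]
    refine Finset.sum_congr rfl fun z _ => ?_
    rw [hψ]
    simp only [Finset.mul_sum]
    refine Finset.sum_congr rfl fun x _ => ?_
    split <;> ring
  rw [step1]
  have step2 : ∀ x : Fin k,
      (∑ z : Fin n → Fin k, if z = Function.const (Fin n) x then
          (∏ j, W (y j) (z j)) * ((1 / s) * ω ^ (t * (x : ℕ))) else 0)
      = (1 / s ^ n) * ω ^ ((x : ℕ) * (t + ∑ j, (y j : ℕ))) * (1 / s) := by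
    intro x
    rw [Finset.sum_ite_eq' Finset.univ (Function.const (Fin n) x)]
    simp only [Finset.mem_univ, if_true, Function.const_apply]
    have hprod : (∏ j, W (y j) x) = ω ^ ((x : ℕ) * ∑ j, (y j : ℕ)) / s ^ n := by
      simp only [hW]
      rw [Finset.prod_div_distrib, Finset.prod_const, Finset.card_univ,
        Fintype.card_fin, Finset.prod_pow_eq_pow_sum, ← Finset.mul_sum]
    rw [hprod]
    rw [mul_add, pow_add, mul_comm ((x:ℕ)) t]
    ring
  simp only [step2]
  rw [← Finset.sum_mul, ← Finset.mul_sum, hgeom]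
  have hsqrt : ((Real.sqrt ((k : ℝ) ^ (n - 1)) : ℝ) : ℂ) = s ^ (n - 1) := by
    have h2 : ((Real.sqrt k) ^ (n - 1)) ^ 2 = (k : ℝ) ^ (n - 1) := by
      rw [← pow_mul, mul_comm, pow_mul, Real.sq_sqrt (by positivity)]
    rw [hs, ← Complex.ofReal_pow, ← h2, Real.sqrt_sq (by positivity)]
  split
  · rw [hsqrt, ← hs2]
    have hpow : s ^ (n - 1) * s ^ 2 = s ^ n * s := by
      rw [← pow_add, ← pow_succ]
      congr 1
      omega
    field_simp
    have hpow' : s * s ^ (n - 1) = s ^ n := by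
      rw [← pow_succ']
      congr 1
      omega
    linear_combination hpow'
  · simp
end

section
/- For n ≥ 1, applying the Hadamard gate H to each of n qubits maps the state (1/√(2^(n-1))) Σ_{x ∈ {0,1}^n, |x| even} |x⟩ to (|0⟩^⊗n + |1⟩^⊗n)/√2, and maps (1/√(2^(n-1))) Σ_{x ∈ {0,1}^n, |x| odd} |x⟩ to (|0⟩^⊗n − |1⟩^⊗n)/√2. -/
lemma sqrt_two_pow (k : ℕ) : Real.sqrt (2 ^ k) = Real.sqrt 2 ^ k := by
  induction k with
  | zero => simp
  | succ k ih => rw [pow_succ, pow_succ, Real.sqrt_mul (by positivity), ih]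

/-- `H^⊗n` maps the uniform superposition of even-weight strings to
`(|0⟩^⊗n + |1⟩^⊗n)/√2` and the uniform superposition of odd-weight strings to
`(|0⟩^⊗n − |1⟩^⊗n)/√2`. -/
theorem stmt_12 (n : ℕ) (hn : 1 ≤ n)
    (H : Bool → Bool → ℝ)
    (hH : ∀ a b, H a b = (if a && b then -1 else 1) / Real.sqrt 2)
    (ψeven ψodd : (Fin n → Bool) → ℝ)
    (hψe : ∀ x, ψeven x =
      if Even (Finset.univ.filter (fun i => x i = true)).card
      then 1 / Real.sqrt (2 ^ (n - 1)) else 0)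
    (hψo : ∀ x, ψodd x =
      if Even (Finset.univ.filter (fun i => x i = true)).card
      then 0 else 1 / Real.sqrt (2 ^ (n - 1))) :
    ((fun y : Fin n → Bool => ∑ z : Fin n → Bool, (∏ i, H (y i) (z i)) * ψeven z)
        = fun y : Fin n → Bool =>
            ((if y = Function.const (Fin n) false then 1 else 0)
              + (if y = Function.const (Fin n) true then 1 else 0)) / Real.sqrt 2)
    ∧ ((fun y : Fin n → Bool => ∑ z : Fin n → Bool, (∏ i, H (y i) (z i)) * ψodd z)
        = fun y : Fin n → Bool =>
            ((if y = Function.const (Fin n) false then 1 else 0)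
              - (if y = Function.const (Fin n) true then 1 else 0)) / Real.sqrt 2) := by
  classical
  have h2pos : (0:ℝ) < Real.sqrt 2 := Real.sqrt_pos.mpr (by norm_num)
  set c : ℝ := 1 / Real.sqrt (2 ^ (n - 1)) with hc
  -- the sign lemma
  have hsign : ∀ z : Fin n → Bool,
      (∏ i, (if z i then (-1:ℝ) else 1))
        = if Even (Finset.univ.filter (fun i => z i = true)).card then 1 else -1 := by
    intro z
    have h1 : (∏ i, (if z i then (-1:ℝ) else 1))
        = (-1:ℝ) ^ (Finset.univ.filter (fun i => z i = true)).card := by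
      rw [Finset.prod_ite, Finset.prod_const, Finset.prod_const, one_pow, mul_one]
    rw [h1]
    split_ifs with h
    · exact h.neg_one_pow
    · exact (Nat.not_even_iff_odd.mp h).neg_one_pow
  have hpsie : ∀ z, ψeven z = c / 2 * (1 + ∏ i, (if z i then (-1:ℝ) else 1)) := by
    intro z; rw [hψe, hsign]; split_ifs <;> ring
  have hpsio : ∀ z, ψodd z = c / 2 * (1 - ∏ i, (if z i then (-1:ℝ) else 1)) := by
    intro z; rw [hψo, hsign]; split_ifs <;> ring
  -- factorization of sums over products
  have hfact : ∀ f : Fin n → Bool → ℝ,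
      (∑ z : Fin n → Bool, ∏ i, f i (z i)) = ∏ i, (f i true + f i false) := by
    intro f
    rw [← Fintype.prod_sum]
    exact Finset.prod_congr rfl (fun i _ => by simp [Fintype.sum_bool])
  have hss : Real.sqrt 2 * Real.sqrt 2 = 2 := Real.mul_self_sqrt (by norm_num)
  have habc : ∀ a : Bool, H a true + H a false = if a then 0 else Real.sqrt 2 := by
    intro a
    rw [hH, hH]
    cases a <;> simp <;> field_simp <;> linarith [hss]
  have habc' : ∀ a : Bool,
      H a true * (-1) + H a false * 1 = if a then Real.sqrt 2 else 0 := by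
    intro a
    rw [hH, hH]
    cases a <;> simp <;> field_simp <;> linarith [hss]
  have hconst : ∀ (b : Bool) (y : Fin n → Bool) (g : Bool → ℝ), g (!b) = 0 →
      (∏ i, g (y i)) = if y = Function.const (Fin n) b then (g b) ^ n else 0 := by
    intro b y g hg
    split_ifs with h
    · subst h; simp [Function.const]
    · obtain ⟨i, hi⟩ : ∃ i, y i ≠ b := by
        by_contra hno
        push_neg at hno
        exact h (funext fun i => hno i)
      refine Finset.prod_eq_zero (Finset.mem_univ i) ?_
      have : y i = !b := by cases b <;> cases hyi : y i <;> simp_all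
      rw [this, hg]
  have h1 : ∀ y : Fin n → Bool, (∑ z : Fin n → Bool, ∏ i, H (y i) (z i))
      = if y = Function.const (Fin n) false then Real.sqrt 2 ^ n else 0 := by
    intro y
    rw [hfact (fun i b => H (y i) b)]
    have := hconst false y (fun a => if a then 0 else Real.sqrt 2) (by simp)
    norm_num at this
    rw [← this]
    exact Finset.prod_congr rfl (fun i _ => habc (y i))
  have h2 : ∀ y : Fin n → Bool,
      (∑ z : Fin n → Bool, ∏ i, H (y i) (z i) * (if z i then (-1:ℝ) else 1))
      = if y = Function.const (Fin n) true then Real.sqrt 2 ^ n else 0 := by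
    intro y
    rw [hfact (fun i b => H (y i) b * (if b then (-1:ℝ) else 1))]
    have := hconst true y (fun a => if a then Real.sqrt 2 else 0) (by simp)
    norm_num at this
    rw [← this]
    refine Finset.prod_congr rfl (fun i _ => ?_)
    simpa using habc' (y i)
  -- key arithmetic
  have hkey : c / 2 * Real.sqrt 2 ^ n = 1 / Real.sqrt 2 := by
    have hspos : (0:ℝ) < Real.sqrt (2 ^ (n - 1)) := Real.sqrt_pos.mpr (by positivity)
    have hn' : n = (n - 1) + 1 := by omega
    rw [hc, sqrt_two_pow]
    rw [hn', pow_succ]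
    field_simp
    rw [Nat.add_sub_cancel, Real.sq_sqrt (by norm_num)]
  have hne : Function.const (Fin n) false ≠ Function.const (Fin n) true := by
    intro h
    have := congrFun h ⟨0, by omega⟩
    simp [Function.const] at this
  constructor <;> funext y
  · have expand : ∀ z : Fin n → Bool, (∏ i, H (y i) (z i)) * ψeven z
        = c / 2 * (∏ i, H (y i) (z i))
          + c / 2 * ∏ i, (H (y i) (z i) * (if z i then (-1:ℝ) else 1)) := by
      intro z; rw [hpsie, Finset.prod_mul_distrib]; ring
    rw [Finset.sum_congr rfl (fun z _ => expand z), Finset.sum_add_distrib,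
      ← Finset.mul_sum, ← Finset.mul_sum, h1, h2]
    split_ifs with hf ht ht
    · exact absurd (hf ▸ ht) hne
    · rw [mul_zero, add_zero, hkey]; ring
    · rw [mul_zero, zero_add, hkey]; ring
    · simp
  · have expand : ∀ z : Fin n → Bool, (∏ i, H (y i) (z i)) * ψodd z
        = c / 2 * (∏ i, H (y i) (z i))
          - c / 2 * ∏ i, (H (y i) (z i) * (if z i then (-1:ℝ) else 1)) := by
      intro z; rw [hpsio, Finset.prod_mul_distrib]; ring
    rw [Finset.sum_congr rfl (fun z _ => expand z), Finset.sum_sub_distrib,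
      ← Finset.mul_sum, ← Finset.mul_sum, h1, h2]
    split_ifs with hf ht ht
    · exact absurd (hf ▸ ht) hne
    · rw [mul_zero, sub_zero, hkey]; ring
    · rw [mul_zero, zero_sub, hkey]; ring
    · simp
end
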